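/- Let f(x,y) = √(αβ) with α = Σ_{i=1}^n x_i², β = Σ_{i=1}^k x_i² + Σ_{i=k+1}^n y_i², and let v₀ = Σ_i (α y_i δ_{i>k} ∂/∂x_i + (β − α δ_{i≤k}) x_i ∂/∂y_i). Then outside L₁ ∪ L₂, v₀ is an eigenvector of the real symmetric matrix M₀ representing dd^c f(·, i·) with eigenvalue (2 Σ_{i≤k} x_i²)/√(αβ). -/

import Mathlib

noncomputable section

/-- ℂⁿ as a real inner product space. -/
abbrev Cn (n : ℕ) := EuclideanSpace ℂ (Fin n)

/-- α(x,y) = Σ xᵢ², the squared distance to L₁ = iℝⁿ. -/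
def alph (n : ℕ) (z : Cn n) : ℝ := ∑ i, (z i).re ^ 2

/-- β(x,y) = Σ_{i≤k} xᵢ² + Σ_{i>k} yᵢ² (0-based: i < k resp. k ≤ i). -/
def bet (n k : ℕ) (z : Cn n) : ℝ :=
  ∑ i : Fin n, if (i : ℕ) < k then (z i).re ^ 2 else (z i).im ^ 2

/-- The Levi quadratic form of a real function `f` at `z` on the (real) vector `v`:
`dd^c f(v, iv) = Hess f(v,v) + Hess f(iv,iv)`.  Weak plurisubharmonicity of `f` at `z`
(positive semidefiniteness of the complex Hessian `(∂²f/∂zᵢ∂z̄ⱼ)`) is equivalent to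
`0 ≤ levi n f z v` for all `v`. -/
def levi (n : ℕ) (f : Cn n → ℝ) (z v : Cn n) : ℝ :=
  iteratedFDeriv ℝ 2 f z ![v, v] + iteratedFDeriv ℝ 2 f z ![Complex.I • v, Complex.I • v]

/-- The symmetric bilinear form `dd^c f(·, i·)(v,w) = Hess f(v,w) + Hess f(iv,iw)`,
whose matrix in the standard real basis of ℝ²ⁿ is `M₀`. -/
def leviB (n : ℕ) (f : Cn n → ℝ) (z v w : Cn n) : ℝ :=
  iteratedFDeriv ℝ 2 f z ![v, w] + iteratedFDeriv ℝ 2 f z ![Complex.I • v, Complex.I • w]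
/-- Σ_{i ≤ k} xᵢ² (0-based: i < k). -/
def sxk (n k : ℕ) (z : Cn n) : ℝ := ∑ i : Fin n, if (i : ℕ) < k then (z i).re ^ 2 else 0

/-- v₀ = Σᵢ (α yᵢ δ_{i>k} ∂/∂xᵢ + (β − α δ_{i≤k}) xᵢ ∂/∂yᵢ), as a vector of ℂⁿ = ℝ²ⁿ. -/
def v0 (n k : ℕ) (z : Cn n) : Cn n :=
  (EuclideanSpace.equiv (Fin n) ℂ).symm fun i =>
    ((if k ≤ (i : ℕ) then alph n z * (z i).im else 0 : ℝ) : ℂ) +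
      (((bet n k z - if (i : ℕ) < k then alph n z else 0) * (z i).re : ℝ) : ℂ) * Complex.I

/-- v₁ = Σᵢ (α yᵢ δ_{i>k} ∂/∂xᵢ − (β + α δ_{i≤k}) xᵢ ∂/∂yᵢ). -/
def v1 (n k : ℕ) (z : Cn n) : Cn n :=
  (EuclideanSpace.equiv (Fin n) ℂ).symm fun i =>
    ((if k ≤ (i : ℕ) then alph n z * (z i).im else 0 : ℝ) : ℂ) -
      (((bet n k z + if (i : ℕ) < k then alph n z else 0) * (z i).re : ℝ) : ℂ) * Complex.I
/-- real part coordinate functional -/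
def Xc (n : ℕ) (i : Fin n) : Cn n →L[ℝ] ℝ :=
  Complex.reCLM.comp ((EuclideanSpace.proj i).restrictScalars ℝ)
def Yc (n : ℕ) (i : Fin n) : Cn n →L[ℝ] ℝ :=
  Complex.imCLM.comp ((EuclideanSpace.proj i).restrictScalars ℝ)

@[simp] lemma Xc_apply (n : ℕ) (i : Fin n) (z : Cn n) : Xc n i z = (z i).re := rfl
@[simp] lemma Yc_apply (n : ℕ) (i : Fin n) (z : Cn n) : Yc n i z = (z i).im := rfl

def dA (n : ℕ) (z : Cn n) : Cn n →L[ℝ] ℝ := ∑ i, (2 * (z i).re) • Xc n i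
def dB (n k : ℕ) (z : Cn n) : Cn n →L[ℝ] ℝ :=
  ∑ i : Fin n, if (i : ℕ) < k then (2 * (z i).re) • Xc n i else (2 * (z i).im) • Yc n i

lemma sq_hasFDerivAt (n : ℕ) (i : Fin n) (z : Cn n) :
    HasFDerivAt (fun q : Cn n => (q i).re ^ 2) ((2 * (z i).re) • Xc n i) z := by
  have h := ((Xc n i).hasFDerivAt (x := z)).mul ((Xc n i).hasFDerivAt (x := z))
  simp only [Xc_apply] at h
  have h' := h.congr_fderiv (show (z i).re • Xc n i + (z i).re • Xc n i = (2 * (z i).re) • Xc n i by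
    rw [two_mul, add_smul])
  refine h'.congr_of_eventuallyEq (Filter.Eventually.of_forall fun q => ?_)
  simp [sq]

lemma sqy_hasFDerivAt (n : ℕ) (i : Fin n) (z : Cn n) :
    HasFDerivAt (fun q : Cn n => (q i).im ^ 2) ((2 * (z i).im) • Yc n i) z := by
  have h := ((Yc n i).hasFDerivAt (x := z)).mul ((Yc n i).hasFDerivAt (x := z))
  simp only [Yc_apply] at h
  have h' := h.congr_fderiv (show (z i).im • Yc n i + (z i).im • Yc n i = (2 * (z i).im) • Yc n i by
    rw [two_mul, add_smul])
  refine h'.congr_of_eventuallyEq (Filter.Eventually.of_forall fun q => ?_)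
  simp [sq]

lemma hasFDerivAt_alph (n : ℕ) (z : Cn n) : HasFDerivAt (alph n) (dA n z) z := by
  unfold alph dA
  exact HasFDerivAt.fun_sum fun i _ => sq_hasFDerivAt n i z

lemma hasFDerivAt_bet (n k : ℕ) (z : Cn n) : HasFDerivAt (bet n k) (dB n k z) z := by
  unfold bet dB
  apply HasFDerivAt.fun_sum (A := fun (i : Fin n) (q : Cn n) =>
    if (i : ℕ) < k then (q i).re ^ 2 else (q i).im ^ 2)
  intro i _
  by_cases h : (i : ℕ) < k <;> simp only [h, if_true, if_false]
  · exact sq_hasFDerivAt n i z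
  · exact sqy_hasFDerivAt n i z

/-- LdA : the (constant) derivative of `dA` as a CLM into CLMs. -/
def LdA (n : ℕ) : Cn n →L[ℝ] (Cn n →L[ℝ] ℝ) :=
  ∑ i, (Xc n i).smulRight ((2 : ℝ) • Xc n i)
def LdB (n k : ℕ) : Cn n →L[ℝ] (Cn n →L[ℝ] ℝ) :=
  ∑ i : Fin n, if (i : ℕ) < k then (Xc n i).smulRight ((2 : ℝ) • Xc n i)
    else (Yc n i).smulRight ((2 : ℝ) • Yc n i)

lemma dA_eq (n : ℕ) (z : Cn n) : dA n z = LdA n z := by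
  unfold dA LdA
  rw [ContinuousLinearMap.sum_apply]
  refine Finset.sum_congr rfl fun i _ => ?_
  ext w
  simp [smul_smul, mul_comm]

lemma dB_eq (n k : ℕ) (z : Cn n) : dB n k z = LdB n k z := by
  unfold dB LdB
  rw [ContinuousLinearMap.sum_apply]
  refine Finset.sum_congr rfl fun i _ => ?_
  by_cases h : (i : ℕ) < k <;> simp only [h, if_true, if_false] <;> ext w <;>
    simp [smul_smul, mul_comm]

/-- the function q ↦ derivative of g = αβ at q -/
def dGf (n k : ℕ) (q : Cn n) : Cn n →L[ℝ] ℝ := alph n q • dB n k q + bet n k q • dA n q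

lemma hasFDerivAt_g (n k : ℕ) (q : Cn n) :
    HasFDerivAt (fun p => alph n p * bet n k p) (dGf n k q) q :=
  (hasFDerivAt_alph n q).mul (hasFDerivAt_bet n k q)

/-- derivative of q ↦ dGf q at z -/
def dGf' (n k : ℕ) (z : Cn n) : Cn n →L[ℝ] (Cn n →L[ℝ] ℝ) :=
  (alph n z • LdB n k + (dA n z).smulRight (dB n k z)) +
    (bet n k z • LdA n + (dB n k z).smulRight (dA n z))

lemma hasFDerivAt_dGf (n k : ℕ) (z : Cn n) :
    HasFDerivAt (dGf n k) (dGf' n k z) z := by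
  have h1 : HasFDerivAt (fun q => alph n q • (LdB n k q))
      (alph n z • LdB n k + (dA n z).smulRight (LdB n k z)) z :=
    (hasFDerivAt_alph n z).smul (LdB n k).hasFDerivAt
  have h2 : HasFDerivAt (fun q => bet n k q • (LdA n q))
      (bet n k z • LdA n + (dB n k z).smulRight (LdA n z)) z :=
    (hasFDerivAt_bet n k z).smul (LdA n).hasFDerivAt
  have h := h1.add h2
  rw [← dA_eq, ← dB_eq] at h
  have h' : HasFDerivAt (dGf n k) (alph n z • LdB n k + (dA n z).smulRight (dB n k z) +
      (bet n k z • LdA n + (dB n k z).smulRight (dA n z))) z := by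
    refine h.congr_of_eventuallyEq (Filter.Eventually.of_forall fun q => ?_)
    simp only [dGf, Pi.add_apply, dA_eq, dB_eq]
  exact h'

lemma alph_nonneg (n : ℕ) (q : Cn n) : 0 ≤ alph n q :=
  Finset.sum_nonneg fun i _ => sq_nonneg _
lemma bet_nonneg (n k : ℕ) (q : Cn n) : 0 ≤ bet n k q :=
  Finset.sum_nonneg fun i _ => by split_ifs <;> exact sq_nonneg _

lemma g_cont (n k : ℕ) : Continuous (fun q : Cn n => alph n q * bet n k q) :=
  continuous_iff_continuousAt.2 fun q => (hasFDerivAt_g n k q).continuousAt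

/-- first derivative of f = √(αβ) -/
def Df (n k : ℕ) (q : Cn n) : Cn n →L[ℝ] ℝ :=
  (2 * Real.sqrt (alph n q * bet n k q))⁻¹ • dGf n k q

lemma hasFDerivAt_f (n k : ℕ) (q : Cn n) (hq : alph n q * bet n k q ≠ 0) :
    HasFDerivAt (fun p => Real.sqrt (alph n p * bet n k p)) (Df n k q) q := by
  have h := (Real.hasDerivAt_sqrt hq).comp_hasFDerivAt q (hasFDerivAt_g n k q)
  simpa [Df, one_div, Function.comp_def] using h

/-- second derivative of f -/
def Df' (n k : ℕ) (z : Cn n) : Cn n →L[ℝ] (Cn n →L[ℝ] ℝ) :=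
  (2 * Real.sqrt (alph n z * bet n k z))⁻¹ • dGf' n k z +
    (((-(2 * (1 / (2 * Real.sqrt (alph n z * bet n k z)))) /
        (2 * Real.sqrt (alph n z * bet n k z)) ^ 2) • dGf n k z).smulRight (dGf n k z))

lemma hasFDerivAt_Df (n k : ℕ) (z : Cn n) (hz : alph n z * bet n k z ≠ 0) :
    HasFDerivAt (Df n k) (Df' n k z) z := by
  have hsq := Real.hasDerivAt_sqrt hz
  have h2 : HasDerivAt (fun t : ℝ => 2 * Real.sqrt t)
      (2 * (1 / (2 * Real.sqrt (alph n z * bet n k z)))) (alph n z * bet n k z) :=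
    hsq.const_mul 2
  have hgz : (0:ℝ) < alph n z * bet n k z :=
    lt_of_le_of_ne (mul_nonneg (alph_nonneg n z) (bet_nonneg n k z)) (Ne.symm hz)
  have hne : 2 * Real.sqrt (alph n z * bet n k z) ≠ 0 := by positivity
  have h3 := h2.inv hne
  have hc := h3.comp_hasFDerivAt z (hasFDerivAt_g n k z)
  have h := hc.smul (hasFDerivAt_dGf n k z)
  exact h

lemma snd_fderiv_eq (n k : ℕ) (z : Cn n) (hz : alph n z * bet n k z ≠ 0) :
    fderiv ℝ (fderiv ℝ (fun p => Real.sqrt (alph n p * bet n k p))) z = Df' n k z := by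
  have hopen : IsOpen {q : Cn n | alph n q * bet n k q ≠ 0} :=
    isOpen_ne.preimage (g_cont n k)
  have hmem : {q : Cn n | alph n q * bet n k q ≠ 0} ∈ nhds z := hopen.mem_nhds hz
  have heq : fderiv ℝ (fun p => Real.sqrt (alph n p * bet n k p)) =ᶠ[nhds z] Df n k := by
    filter_upwards [hmem] with q hq
    exact (hasFDerivAt_f n k q hq).fderiv
  rw [heq.fderiv_eq]
  exact (hasFDerivAt_Df n k z hz).fderiv

lemma dA_apply' (n : ℕ) (z u : Cn n) : dA n z u = ∑ i, 2 * (z i).re * (u i).re := by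
  simp [dA, ContinuousLinearMap.sum_apply, mul_assoc]

lemma dB_apply' (n k : ℕ) (z u : Cn n) :
    dB n k z u = ∑ i : Fin n, if (i : ℕ) < k then 2 * (z i).re * (u i).re
      else 2 * (z i).im * (u i).im := by
  unfold dB
  rw [ContinuousLinearMap.sum_apply]
  refine Finset.sum_congr rfl fun i _ => ?_
  by_cases h : (i : ℕ) < k <;> simp [h, mul_assoc]

lemma LdA_apply' (n : ℕ) (u v : Cn n) : LdA n u v = ∑ i, 2 * (u i).re * (v i).re := by
  unfold LdA
  rw [ContinuousLinearMap.sum_apply, ContinuousLinearMap.sum_apply]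
  refine Finset.sum_congr rfl fun i _ => ?_
  simp [mul_assoc, mul_comm, mul_left_comm]

lemma LdB_apply' (n k : ℕ) (u v : Cn n) :
    LdB n k u v = ∑ i : Fin n, if (i : ℕ) < k then 2 * (u i).re * (v i).re
      else 2 * (u i).im * (v i).im := by
  unfold LdB
  rw [ContinuousLinearMap.sum_apply, ContinuousLinearMap.sum_apply]
  refine Finset.sum_congr rfl fun i _ => ?_
  by_cases h : (i : ℕ) < k <;> simp [h, mul_assoc, mul_comm, mul_left_comm]

lemma I_smul_re (n : ℕ) (u : Cn n) (i : Fin n) :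
    ((Complex.I • u) i).re = -((u i).im) := by
  simp [PiLp.smul_apply, Complex.mul_re]

lemma I_smul_im (n : ℕ) (u : Cn n) (i : Fin n) :
    ((Complex.I • u) i).im = (u i).re := by
  simp [PiLp.smul_apply, Complex.mul_im]

lemma inner_re' (n : ℕ) (z w : Cn n) :
    (inner ℝ z w : ℝ) = ∑ i, ((z i).re * (w i).re + (z i).im * (w i).im) := by
  simp [inner, Complex.mul_re]
  refine Finset.sum_congr rfl fun i _ => ?_
  ring

lemma Df'_apply (n k : ℕ) (z v w : Cn n) : Df' n k z v w =
    (2 * Real.sqrt (alph n z * bet n k z))⁻¹ *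
      (alph n z * (LdB n k v w) + dA n z v * dB n k z w + bet n k z * (LdA n v w) +
        dB n k z v * dA n z w) +
    (-(2 * (1 / (2 * Real.sqrt (alph n z * bet n k z)))) /
        (2 * Real.sqrt (alph n z * bet n k z)) ^ 2 *
      (alph n z * dB n k z v + bet n k z * dA n z v)) *
      (alph n z * dB n k z w + bet n k z * dA n z w) := by
  simp only [Df', dGf', dGf, ContinuousLinearMap.add_apply, ContinuousLinearMap.coe_smul',
    Pi.smul_apply, ContinuousLinearMap.smulRight_apply, smul_eq_mul]
  ring

lemma key (A B K S B1 T2 C1 C2 E F2 r : ℝ) (hr : r^2 = A*B) (h0 : r ≠ 0) :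
    ((2*r)⁻¹ * (A*((2*B)*C2) + ((2*A)*S)*((2:ℝ)*B1+2*F2) + B*((2*A)*E) + ((2*B)*S)*((2:ℝ)*B1+2*T2))
      + ((-(2*(1/(2*r)))/(2*r)^2) * (A*((2*B)*S) + B*((2*A)*S))) * (A*((2:ℝ)*B1+2*F2) + B*((2:ℝ)*B1+2*T2)))
    + ((2*r)⁻¹ * (A*((2*(B-A))*C1 + (2*A)*E) + ((-(2*B))*A + (2*A)*K)*((-2:ℝ)*C1+2*E)
        + B*((2*(B-A))*C1 + (2*B)*C2) + ((2*A)*B + (-(2*B))*K)*((-2:ℝ)*C1+(-2:ℝ)*C2))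
      + ((-(2*(1/(2*r)))/(2*r)^2) * (A*((2*A)*B + (-(2*B))*K) + B*((-(2*B))*A + (2*A)*K)))
          * (A*((-2:ℝ)*C1+2*E) + B*((-2:ℝ)*C1+(-2:ℝ)*C2)))
    = (2*K/r) * ((B - A)*C1 + A*E + B*C2) := by
  field_simp
  linear_combination ((A * (B * C2 + 2 * S * (B1 + F2) + B * E) + 2 * B * S * (B1 + T2))
    + (A * ((B - A) * C1 + A * E + 2 * (-B + K) * (-C1 + E)) + B * ((B - A) * C1 + B * C2) +
      2 * B * (A + -K) * (-C1 + -C2)) - 2 * K * ((B - A) * C1 + A * E + B * C2)) * hr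

lemma v0_re (n k : ℕ) (z : Cn n) (i : Fin n) :
    ((v0 n k z) i).re = if k ≤ (i : ℕ) then alph n z * (z i).im else 0 := by
  simp [v0]

lemma v0_im (n k : ℕ) (z : Cn n) (i : Fin n) :
    ((v0 n k z) i).im = (bet n k z - if (i : ℕ) < k then alph n z else 0) * (z i).re := by
  simp [v0]

lemma comb1 {m : ℕ} (c : ℝ) (f : Fin m → ℝ) : c * (∑ i, f i) = ∑ i, c * f i :=
  Finset.mul_sum _ _ _

lemma comb {m : ℕ} (c d : ℝ) (f g : Fin m → ℝ) :
    c * (∑ i, f i) + d * (∑ i, g i) = ∑ i, (c * f i + d * g i) := by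
  rw [Finset.mul_sum, Finset.mul_sum, ← Finset.sum_add_distrib]

lemma comb3 {m : ℕ} (c d e : ℝ) (f g h : Fin m → ℝ) :
    c * (∑ i, f i) + d * (∑ i, g i) + e * (∑ i, h i) = ∑ i, (c * f i + d * g i + e * h i) := by
  rw [Finset.mul_sum, Finset.mul_sum, Finset.mul_sum, ← Finset.sum_add_distrib,
    ← Finset.sum_add_distrib]

theorem v0_eigenvector (n k : ℕ) (hk : k ≤ n) (z : Cn n)
    (h1 : alph n z ≠ 0) (h2 : bet n k z ≠ 0) (w : Cn n) :
    leviB n (fun q => Real.sqrt (alph n q * bet n k q)) z (v0 n k z) w =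
      (2 * sxk n k z / Real.sqrt (alph n z * bet n k z)) * (inner ℝ (v0 n k z) w : ℝ) := by
  have hz : alph n z * bet n k z ≠ 0 := mul_ne_zero h1 h2
  have hgz : (0:ℝ) < alph n z * bet n k z :=
    lt_of_le_of_ne (mul_nonneg (alph_nonneg n z) (bet_nonneg n k z)) (Ne.symm hz)
  have e1 : dA n z (v0 n k z) =
      (2 * alph n z) * (∑ i : Fin n, if (i:ℕ) < k then (0:ℝ) else (z i).re * (z i).im) := by
    rw [dA_apply', comb1]
    refine Finset.sum_congr rfl fun i _ => ?_
    simp only [v0_re]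
    rcases Nat.lt_or_ge (i:ℕ) k with h | h
    · simp only [if_pos h, if_neg (not_le.mpr h)]; ring
    · simp only [if_pos h, if_neg (not_lt.mpr h)]; ring
  have e2 : dB n k z (v0 n k z) =
      (2 * bet n k z) * (∑ i : Fin n, if (i:ℕ) < k then (0:ℝ) else (z i).re * (z i).im) := by
    rw [dB_apply', comb1]
    refine Finset.sum_congr rfl fun i _ => ?_
    simp only [v0_re, v0_im]
    rcases Nat.lt_or_ge (i:ℕ) k with h | h
    · simp only [if_pos h, if_neg (not_le.mpr h)]; ring
    · simp only [if_pos h, if_neg (not_lt.mpr h)]; ring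
  have e3 : dA n z (Complex.I • v0 n k z) =
      (-(2 * bet n k z)) * alph n z + (2 * alph n z) * sxk n k z := by
    show dA n z (Complex.I • v0 n k z) =
      (-(2 * bet n k z)) * (∑ i : Fin n, (z i).re ^ 2) +
        (2 * alph n z) * (∑ i : Fin n, if (i:ℕ) < k then (z i).re ^ 2 else (0:ℝ))
    rw [dA_apply', comb]
    refine Finset.sum_congr rfl fun i _ => ?_
    simp only [I_smul_re, v0_im]
    rcases Nat.lt_or_ge (i:ℕ) k with h | h
    · simp only [if_pos h, if_neg (not_le.mpr h)]; ring
    · simp only [if_pos h, if_neg (not_lt.mpr h)]; ring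
  have e4 : dB n k z (Complex.I • v0 n k z) =
      (2 * alph n z) * bet n k z + (-(2 * bet n k z)) * sxk n k z := by
    show dB n k z (Complex.I • v0 n k z) =
      (2 * alph n z) * (∑ i : Fin n, if (i:ℕ) < k then (z i).re ^ 2 else (z i).im ^ 2) +
        (-(2 * bet n k z)) * (∑ i : Fin n, if (i:ℕ) < k then (z i).re ^ 2 else (0:ℝ))
    rw [dB_apply', comb]
    refine Finset.sum_congr rfl fun i _ => ?_
    simp only [I_smul_re, I_smul_im, v0_re, v0_im]
    rcases Nat.lt_or_ge (i:ℕ) k with h | h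
    · simp only [if_pos h, if_neg (not_le.mpr h)]; ring
    · simp only [if_pos h, if_neg (not_lt.mpr h)]; ring
  have e5 : dA n z w = 2 * (∑ i : Fin n, if (i:ℕ) < k then (z i).re * (w i).re else (0:ℝ)) +
      2 * (∑ i : Fin n, if (i:ℕ) < k then (0:ℝ) else (z i).re * (w i).re) := by
    rw [dA_apply', comb]
    refine Finset.sum_congr rfl fun i _ => ?_
    rcases Nat.lt_or_ge (i:ℕ) k with h | h
    · simp only [if_pos h, if_neg (not_le.mpr h)]; ring
    · simp only [if_pos h, if_neg (not_lt.mpr h)]; ring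
  have e6 : dB n k z w = 2 * (∑ i : Fin n, if (i:ℕ) < k then (z i).re * (w i).re else (0:ℝ)) +
      2 * (∑ i : Fin n, if (i:ℕ) < k then (0:ℝ) else (z i).im * (w i).im) := by
    rw [dB_apply', comb]
    refine Finset.sum_congr rfl fun i _ => ?_
    rcases Nat.lt_or_ge (i:ℕ) k with h | h
    · simp only [if_pos h, if_neg (not_le.mpr h)]; ring
    · simp only [if_pos h, if_neg (not_lt.mpr h)]; ring
  have e7 : dA n z (Complex.I • w) =
      (-2:ℝ) * (∑ i : Fin n, if (i:ℕ) < k then (z i).re * (w i).im else (0:ℝ)) +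
      (-2:ℝ) * (∑ i : Fin n, if (i:ℕ) < k then (0:ℝ) else (z i).re * (w i).im) := by
    rw [dA_apply', comb]
    refine Finset.sum_congr rfl fun i _ => ?_
    simp only [I_smul_re]
    rcases Nat.lt_or_ge (i:ℕ) k with h | h
    · simp only [if_pos h, if_neg (not_le.mpr h)]; ring
    · simp only [if_pos h, if_neg (not_lt.mpr h)]; ring
  have e8 : dB n k z (Complex.I • w) =
      (-2:ℝ) * (∑ i : Fin n, if (i:ℕ) < k then (z i).re * (w i).im else (0:ℝ)) +
      2 * (∑ i : Fin n, if (i:ℕ) < k then (0:ℝ) else (z i).im * (w i).re) := by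
    rw [dB_apply', comb]
    refine Finset.sum_congr rfl fun i _ => ?_
    simp only [I_smul_re, I_smul_im]
    rcases Nat.lt_or_ge (i:ℕ) k with h | h
    · simp only [if_pos h, if_neg (not_le.mpr h)]; ring
    · simp only [if_pos h, if_neg (not_lt.mpr h)]; ring
  have e9 : LdA n (v0 n k z) w =
      (2 * alph n z) * (∑ i : Fin n, if (i:ℕ) < k then (0:ℝ) else (z i).im * (w i).re) := by
    rw [LdA_apply', comb1]
    refine Finset.sum_congr rfl fun i _ => ?_
    simp only [v0_re]
    rcases Nat.lt_or_ge (i:ℕ) k with h | h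
    · simp only [if_pos h, if_neg (not_le.mpr h)]; ring
    · simp only [if_pos h, if_neg (not_lt.mpr h)]; ring
  have e10 : LdB n k (v0 n k z) w =
      (2 * bet n k z) * (∑ i : Fin n, if (i:ℕ) < k then (0:ℝ) else (z i).re * (w i).im) := by
    rw [LdB_apply', comb1]
    refine Finset.sum_congr rfl fun i _ => ?_
    simp only [v0_re, v0_im]
    rcases Nat.lt_or_ge (i:ℕ) k with h | h
    · simp only [if_pos h, if_neg (not_le.mpr h)]; ring
    · simp only [if_pos h, if_neg (not_lt.mpr h)]; ring
  have e11 : LdA n (Complex.I • v0 n k z) (Complex.I • w) =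
      (2 * (bet n k z - alph n z)) *
        (∑ i : Fin n, if (i:ℕ) < k then (z i).re * (w i).im else (0:ℝ)) +
      (2 * bet n k z) * (∑ i : Fin n, if (i:ℕ) < k then (0:ℝ) else (z i).re * (w i).im) := by
    rw [LdA_apply', comb]
    refine Finset.sum_congr rfl fun i _ => ?_
    simp only [I_smul_re, v0_im]
    rcases Nat.lt_or_ge (i:ℕ) k with h | h
    · simp only [if_pos h, if_neg (not_le.mpr h)]; ring
    · simp only [if_pos h, if_neg (not_lt.mpr h)]; ring
  have e12 : LdB n k (Complex.I • v0 n k z) (Complex.I • w) =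
      (2 * (bet n k z - alph n z)) *
        (∑ i : Fin n, if (i:ℕ) < k then (z i).re * (w i).im else (0:ℝ)) +
      (2 * alph n z) * (∑ i : Fin n, if (i:ℕ) < k then (0:ℝ) else (z i).im * (w i).re) := by
    rw [LdB_apply', comb]
    refine Finset.sum_congr rfl fun i _ => ?_
    simp only [I_smul_re, I_smul_im, v0_re, v0_im]
    rcases Nat.lt_or_ge (i:ℕ) k with h | h
    · simp only [if_pos h, if_neg (not_le.mpr h)]; ring
    · simp only [if_pos h, if_neg (not_lt.mpr h)]; ring
  have einner : (inner ℝ (v0 n k z) w : ℝ) =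
      (bet n k z - alph n z) *
        (∑ i : Fin n, if (i:ℕ) < k then (z i).re * (w i).im else (0:ℝ)) +
      alph n z * (∑ i : Fin n, if (i:ℕ) < k then (0:ℝ) else (z i).im * (w i).re) +
      bet n k z * (∑ i : Fin n, if (i:ℕ) < k then (0:ℝ) else (z i).re * (w i).im) := by
    rw [inner_re', comb3]
    refine Finset.sum_congr rfl fun i _ => ?_
    simp only [v0_re, v0_im]
    rcases Nat.lt_or_ge (i:ℕ) k with h | h
    · simp only [if_pos h, if_neg (not_le.mpr h)]; ring
    · simp only [if_pos h, if_neg (not_lt.mpr h)]; ring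
  unfold leviB
  rw [iteratedFDeriv_two_apply, iteratedFDeriv_two_apply]
  simp only [Matrix.cons_val_zero, Matrix.cons_val_one, Matrix.head_cons]
  rw [snd_fderiv_eq n k z hz, Df'_apply, Df'_apply, e1, e2, e3, e4, e5, e6, e7, e8, e9,
    e10, e11, e12, einner]
  exact key _ _ _ _ _ _ _ _ _ _ _ (Real.sq_sqrt hgz.le) (Real.sqrt_ne_zero'.mpr hgz)
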